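/- L₂ operator bound for QMC hyperinterpolation: let Ω = [0,1)^d, let (q_h)_{h∈I} be a finite orthonormal family in L₂(Ω), and let x₀,…,x_{N−1} ∈ Ω and η ∈ (0,1) be such that |(1/N)Σ_{n} |p(x_n)|² − ∫_Ω |p|²| ≤ η∫_Ω |p|² for every p ∈ span{q_h : h ∈ I}. Define Q_I f = Σ_{h∈I} ((1/N)Σ_n f(x_n) conj(q_h(x_n))) q_h. Then for every bounded f, ‖Q_I f‖_{L₂} ≤ √(1+η)·‖f‖_∞. -/

import Mathlib

open Complex Finset MeasureTheory

/-- The unit cube `[0,1)^d`. -/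
def unitCube (d : ℕ) : Set (Fin d → ℝ) := Set.univ.pi fun _ => Set.Ico (0 : ℝ) 1

lemma para (z w : ℂ) : ‖z + w‖^2 + ‖z - w‖^2
    = 2*‖z‖^2 + 2*‖w‖^2 := by
  simp only [Complex.sq_norm, Complex.normSq_apply, Complex.add_re, Complex.add_im,
    Complex.sub_re, Complex.sub_im]
  ring

lemma re_expand (z w : ℂ) : (z * (starRingEnd ℂ) w).re
    = (‖z + w‖^2 - ‖z‖^2 - ‖w‖^2)/2 := by
  simp only [Complex.sq_norm, Complex.normSq_apply, Complex.mul_re, Complex.add_re,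
    Complex.add_im, Complex.conj_re, Complex.conj_im]
  ring

lemma im_expand (z w : ℂ) : (z * (starRingEnd ℂ) w).im
    = (‖z + Complex.I*w‖^2 - ‖z‖^2 - ‖w‖^2)/2 := by
  simp only [Complex.sq_norm, Complex.normSq_apply, Complex.mul_re, Complex.mul_im,
    Complex.add_re, Complex.add_im, Complex.conj_re, Complex.conj_im, Complex.I_re, Complex.I_im]
  ring

/-- L₂ operator bound for QMC hyperinterpolation: if the equal-weight quadrature rule
satisfies the relaxed Marcinkiewicz–Zygmund-type condition with parameter `η ∈ (0,1)`
on the span of the orthonormal family `(q_h)_{h∈I}`, then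
`‖Q_I f‖_{L₂} ≤ √(1+η)·‖f‖_∞` for every bounded `f`. -/
theorem qmc_hyperinterpolation_operator_bound
    {ι : Type*} [DecidableEq ι] (d N : ℕ) (hN : 1 ≤ N) (I : Finset ι)
    (q : ι → (Fin d → ℝ) → ℂ)
    (horth : ∀ h ∈ I, ∀ h' ∈ I,
      (∫ y in unitCube d, q h y * (starRingEnd ℂ) (q h' y)) =
        if h = h' then 1 else 0)
    (x : ℕ → Fin d → ℝ) (hxmem : ∀ n, x n ∈ unitCube d)
    (η : ℝ) (hη0 : 0 < η) (hη1 : η < 1)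
    (hMZ : ∀ a : ι → ℂ,
      |(1 / (N : ℝ)) * ∑ n ∈ Finset.range N,
            ‖∑ h ∈ I, a h * q h (x n)‖ ^ 2 -
          ∫ y in unitCube d, ‖∑ h ∈ I, a h * q h y‖ ^ 2| ≤
        η * ∫ y in unitCube d, ‖∑ h ∈ I, a h * q h y‖ ^ 2)
    (f : (Fin d → ℝ) → ℂ) (C : ℝ) (hf : ∀ y ∈ unitCube d, ‖f y‖ ≤ C)
    (Qf : (Fin d → ℝ) → ℂ)
    (hQf : ∀ y, Qf y = ∑ h ∈ I,
      ((1 / (N : ℂ)) * ∑ n ∈ Finset.range N, f (x n) * (starRingEnd ℂ) (q h (x n))) * q h y) :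
    Real.sqrt (∫ y in unitCube d, ‖Qf y‖ ^ 2) ≤ Real.sqrt (1 + η) * C := by
  classical
  have hN0 : (0:ℝ) < N := by exact_mod_cast hN
  have hC0 : 0 ≤ C := le_trans (norm_nonneg _) (hf (x 0) (hxmem 0))
  have hptw : ∀ z : ℂ, z * (starRingEnd ℂ) z = ((‖z‖ ^ 2 : ℝ) : ℂ) := fun z => by
    rw [Complex.mul_conj, ← Complex.sq_norm]
  -- nonintegrable ⇒ nodes vanish
  have hnodes : ∀ a : ι → ℂ,
      ¬ Integrable (fun y => ‖∑ h ∈ I, a h * q h y‖ ^ 2)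
        ((volume : Measure (Fin d → ℝ)).restrict (unitCube d)) →
      ∀ n < N, (∑ h ∈ I, a h * q h (x n)) = 0 := by
    intro a hni n hn
    have hT : (∫ y in unitCube d, ‖∑ h ∈ I, a h * q h y‖ ^ 2) = 0 :=
      integral_undef hni
    have h2 := hMZ a
    rw [hT] at h2
    simp only [sub_zero, mul_zero] at h2
    have hD : (1 / (N : ℝ)) * ∑ n ∈ Finset.range N,
        ‖∑ h ∈ I, a h * q h (x n)‖ ^ 2 = 0 := le_antisymm (le_trans (le_abs_self _) h2)
      (by positivity)
    have hsum : ∑ n ∈ Finset.range N, ‖∑ h ∈ I, a h * q h (x n)‖ ^ 2 = 0 := by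
      have hne : (1 / (N : ℝ)) ≠ 0 := by positivity
      exact (mul_eq_zero.mp hD).resolve_left hne
    have h3 := (Finset.sum_eq_zero_iff_of_nonneg (fun i _ => by positivity)).mp hsum n
      (Finset.mem_range.mpr hn)
    exact norm_eq_zero.mp (pow_eq_zero_iff (n := 2) (by norm_num) |>.mp h3)
  -- diag
  have hdiagC : ∀ h ∈ I, Integrable (fun y => q h y * (starRingEnd ℂ) (q h y))
      ((volume : Measure (Fin d → ℝ)).restrict (unitCube d)) := by
    intro h hh
    by_contra hni
    have h0 := horth h hh h hh
    rw [integral_undef hni] at h0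
    simp at h0
  have hdiagR : ∀ h ∈ I, Integrable (fun y => ‖q h y‖^2)
      ((volume : Measure (Fin d → ℝ)).restrict (unitCube d)) := by
    intro h hh
    simpa only [hptw, RCLike.re_to_complex, Complex.ofReal_re] using (hdiagC h hh).re
  have hTone : ∀ h ∈ I, (∫ y in unitCube d, ‖q h y‖^2) = 1 := by
    intro h hh
    have h0 := integral_re (hdiagC h hh)
    rw [horth h hh h hh, if_pos rfl] at h0
    simpa only [hptw, RCLike.re_to_complex, Complex.ofReal_re, Complex.one_re] using h0
  -- single sum simplification
  have hsingle : ∀ h ∈ I, ∀ y, ∑ k ∈ I, (if k = h then (1:ℂ) else 0) * q k y = q h y := by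
    intro h hh y
    have hcongr : ∀ k ∈ I, (if k = h then (1:ℂ) else 0) * q k y
        = if k = h then q k y else 0 := by
      intro k _; rcases eq_or_ne k h with hk | hk <;> simp [hk]
    rw [Finset.sum_congr rfl hcongr, Finset.sum_ite_eq' I h (fun k => q k y), if_pos hh]
  -- cross integrability
  have hcross : ∀ h ∈ I, ∀ h' ∈ I, Integrable (fun y => q h y * (starRingEnd ℂ) (q h' y))
      ((volume : Measure (Fin d → ℝ)).restrict (unitCube d)) := by
    intro h hh h' hh'
    rcases eq_or_ne h h' with rfl | hne
    · exact hdiagC h hh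
    -- pair sum simplification
    have hpair : ∀ t : ℂ, ∀ y, ∑ k ∈ I, (if k = h then (1:ℂ) else if k = h' then t else 0) * q k y
        = q h y + t * q h' y := by
      intro t y
      have hcongr : ∀ k ∈ I, (if k = h then (1:ℂ) else if k = h' then t else 0) * q k y
          = (if k = h then q k y else 0) + (if k = h' then t * q k y else 0) := by
        intro k _
        rcases eq_or_ne k h with hk | hk
        · subst hk; rw [if_pos rfl, if_pos rfl, if_neg hne, one_mul, add_zero]
        · rcases eq_or_ne k h' with hk' | hk'
          · subst hk'; rw [if_neg hk, if_neg hk, if_pos rfl, if_pos rfl, zero_add]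
          · rw [if_neg hk, if_neg hk, if_neg hk', if_neg hk', zero_mul, add_zero]
      rw [Finset.sum_congr rfl hcongr, Finset.sum_add_distrib,
        Finset.sum_ite_eq' I h (fun k => q k y), Finset.sum_ite_eq' I h' (fun k => t * q k y),
        if_pos hh, if_pos hh']
    -- both members of the pair (t, -t) are integrable
    have hG : ∀ t : ℂ, ‖t‖ = 1 →
        Integrable (fun y => ‖q h y + t * q h' y‖^2)
          ((volume : Measure (Fin d → ℝ)).restrict (unitCube d)) := by
      have hflip : ∀ t : ℂ, ‖t‖ = 1 →
          Integrable (fun y => ‖q h y + t * q h' y‖^2)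
            ((volume : Measure (Fin d → ℝ)).restrict (unitCube d)) →
          Integrable (fun y => ‖q h y + (-t) * q h' y‖^2)
            ((volume : Measure (Fin d → ℝ)).restrict (unitCube d)) := by
        intro t ht hint
        have heq : (fun y => ‖q h y + (-t) * q h' y‖^2)
            = fun y => 2*‖q h y‖^2 + 2*‖q h' y‖^2
              - ‖q h y + t * q h' y‖^2 := by
          funext y
          have hp := para (q h y) (t * q h' y)
          have habs : ‖t * q h' y‖^2 = ‖q h' y‖^2 := by
            rw [norm_mul, ht, one_mul]
          have hrw : q h y + (-t) * q h' y = q h y - t * q h' y := by ring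
          rw [hrw]
          linarith
        rw [heq]
        exact ((((hdiagR h hh).const_mul 2).add ((hdiagR h' hh').const_mul 2)).sub hint)
      intro t ht
      by_cases h1 : Integrable (fun y => ‖q h y + t * q h' y‖^2)
          ((volume : Measure (Fin d → ℝ)).restrict (unitCube d))
      · exact h1
      exfalso
      have h2 : ¬ Integrable (fun y => ‖q h y + (-t) * q h' y‖^2)
          ((volume : Measure (Fin d → ℝ)).restrict (unitCube d)) := by
        intro h2
        exact h1 (by simpa [neg_neg] using hflip (-t) (by simpa using ht) h2)
      -- both nonintegrable: nodes vanish, contradiction with hMZ at e_h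
      have hz1 := hnodes (fun k => if k = h then (1:ℂ) else if k = h' then t else 0)
        (by simpa only [hpair t] using h1)
      have hz2 := hnodes (fun k => if k = h then (1:ℂ) else if k = h' then -t else 0)
        (by simpa only [hpair (-t)] using h2)
      have hq0 : ∀ n < N, q h (x n) = 0 := by
        intro n hn
        have e1 := hz1 n hn
        have e2 := hz2 n hn
        rw [hpair t] at e1
        rw [hpair (-t)] at e2
        have : (2:ℂ) * q h (x n) = 0 := by linear_combination e1 + e2
        simpa using this
      have h3 := hMZ (fun k => if k = h then (1:ℂ) else 0)
      simp only [hsingle h hh] at h3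
      rw [hTone h hh] at h3
      have hD0 : ∑ n ∈ Finset.range N, ‖q h (x n)‖ ^ 2 = 0 :=
        Finset.sum_eq_zero (fun n hn => by rw [hq0 n (Finset.mem_range.mp hn)]; simp)
      rw [hD0, mul_zero, zero_sub, abs_neg, abs_one, mul_one] at h3
      linarith
    -- assemble integrability of the cross product
    have hre : Integrable (fun y => (q h y * (starRingEnd ℂ) (q h' y)).re)
        ((volume : Measure (Fin d → ℝ)).restrict (unitCube d)) := by
      have heqre : (fun y => (q h y * (starRingEnd ℂ) (q h' y)).re)
          = fun y => (‖q h y + 1 * q h' y‖^2 - ‖q h y‖^2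
              - ‖q h' y‖^2)/2 := by
        funext y; rw [re_expand, one_mul]
      rw [heqre]
      exact (((hG 1 (by simp)).sub (hdiagR h hh)).sub (hdiagR h' hh')).div_const 2
    have him : Integrable (fun y => (q h y * (starRingEnd ℂ) (q h' y)).im)
        ((volume : Measure (Fin d → ℝ)).restrict (unitCube d)) := by
      have heqim : (fun y => (q h y * (starRingEnd ℂ) (q h' y)).im)
          = fun y => (‖q h y + Complex.I * q h' y‖^2 - ‖q h y‖^2
              - ‖q h' y‖^2)/2 := by
        funext y; rw [im_expand]
      rw [heqim]
      exact (((hG Complex.I (by simp)).sub (hdiagR h hh)).sub (hdiagR h' hh')).div_const 2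
    exact Integrable.re_im_iff.mp ⟨hre, him⟩
  -- coefficients
  set c : ι → ℂ := fun h =>
    (1 / (N : ℂ)) * ∑ n ∈ Finset.range N, f (x n) * (starRingEnd ℂ) (q h (x n)) with hc
  have hQf' : ∀ y, Qf y = ∑ h ∈ I, c h * q h y := by
    intro y; rw [hQf]
  have hprod : ∀ y, Qf y * (starRingEnd ℂ) (Qf y)
      = ∑ h ∈ I, ∑ h' ∈ I, (c h * (starRingEnd ℂ) (c h')) * (q h y * (starRingEnd ℂ) (q h' y)) := by
    intro y
    rw [hQf' y, map_sum, Finset.sum_mul_sum]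
    refine Finset.sum_congr rfl fun h _ => Finset.sum_congr rfl fun h' _ => ?_
    rw [map_mul]; ring
  have hQint : Integrable (fun y => Qf y * (starRingEnd ℂ) (Qf y))
      ((volume : Measure (Fin d → ℝ)).restrict (unitCube d)) := by
    rw [funext hprod]
    exact integrable_finset_sum _ (fun h hh => integrable_finset_sum _
      (fun h' hh' => (hcross h hh h' hh').const_mul _))
  set S : ℝ := ∑ h ∈ I, ‖c h‖^2 with hSdef
  have hsum_eq : ∑ h ∈ I, c h * (starRingEnd ℂ) (c h) = ((S : ℝ) : ℂ) := by
    rw [hSdef, Complex.ofReal_sum]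
    exact Finset.sum_congr rfl fun h _ => hptw (c h)
  have hQval : (∫ y in unitCube d, Qf y * (starRingEnd ℂ) (Qf y)) = ((S : ℝ) : ℂ) := by
    rw [funext hprod, integral_finset_sum _ (fun h hh => integrable_finset_sum _
      (fun h' hh' => (hcross h hh h' hh').const_mul _))]
    rw [← hsum_eq]
    refine Finset.sum_congr rfl fun h hh => ?_
    rw [integral_finset_sum _ (fun h' hh' => (hcross h hh h' hh').const_mul _)]
    have hterm : ∀ h' ∈ I, (∫ y in unitCube d,
        (c h * (starRingEnd ℂ) (c h')) * (q h y * (starRingEnd ℂ) (q h' y)))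
        = if h = h' then c h * (starRingEnd ℂ) (c h') else 0 := by
      intro h' hh'
      rw [integral_const_mul, horth h hh h' hh']
      rcases eq_or_ne h h' with rfl | hne
      · rw [if_pos rfl, if_pos rfl, mul_one]
      · rw [if_neg hne, if_neg hne, mul_zero]
    rw [Finset.sum_congr rfl hterm]
    simp only [Finset.sum_ite_eq, hh, if_pos]
  have hTS : (∫ y in unitCube d, ‖Qf y‖^2) = S := by
    have h1 := integral_re hQint
    rw [hQval] at h1
    simpa only [hptw, RCLike.re_to_complex, Complex.ofReal_re] using h1
  have hS_nonneg : (0:ℝ) ≤ S := Finset.sum_nonneg fun h _ => by positivity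
  -- key identity
  have hkey : ((S : ℝ) : ℂ)
      = (1/(N:ℂ)) * ∑ n ∈ Finset.range N, (starRingEnd ℂ) (f (x n)) * Qf (x n) := by
    rw [← hsum_eq]
    have hconj : ∀ h, (starRingEnd ℂ) (c h)
        = (1/(N:ℂ)) * ∑ n ∈ Finset.range N, (starRingEnd ℂ) (f (x n)) * q h (x n) := by
      intro h
      rw [hc]
      simp only [map_mul, map_sum, map_div₀, map_one, map_natCast, Complex.conj_conj]
    calc ∑ h ∈ I, c h * (starRingEnd ℂ) (c h)
        = ∑ h ∈ I, ∑ n ∈ Finset.range N,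
            (1/(N:ℂ)) * ((starRingEnd ℂ) (f (x n)) * (c h * q h (x n))) := by
          refine Finset.sum_congr rfl fun h _ => ?_
          rw [hconj h, Finset.mul_sum, Finset.mul_sum]
          exact Finset.sum_congr rfl fun n _ => by ring
      _ = ∑ n ∈ Finset.range N, ∑ h ∈ I,
            (1/(N:ℂ)) * ((starRingEnd ℂ) (f (x n)) * (c h * q h (x n))) := Finset.sum_comm
      _ = (1/(N:ℂ)) * ∑ n ∈ Finset.range N, (starRingEnd ℂ) (f (x n)) * Qf (x n) := by
          simp only [hQf', Finset.mul_sum]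
  -- bound S by C * mean of |Qf| at nodes
  have hSle : S ≤ C * ((1/(N:ℝ)) * ∑ n ∈ Finset.range N, ‖Qf (x n)‖) := by
    have h1 : ‖((S:ℝ):ℂ)‖ = S := by rw [Complex.norm_real, Real.norm_eq_abs, _root_.abs_of_nonneg hS_nonneg]
    rw [← h1, hkey, norm_mul]
    have h2 : ‖1/(N:ℂ)‖ = 1/(N:ℝ) := by
      rw [norm_div, norm_one, Complex.norm_natCast]
    rw [h2]
    calc (1/(N:ℝ)) * ‖∑ n ∈ Finset.range N, (starRingEnd ℂ) (f (x n)) * Qf (x n)‖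
        ≤ (1/(N:ℝ)) * ∑ n ∈ Finset.range N, ‖(starRingEnd ℂ) (f (x n)) * Qf (x n)‖ :=
          mul_le_mul_of_nonneg_left (norm_sum_le _ _) (by positivity)
      _ ≤ (1/(N:ℝ)) * ∑ n ∈ Finset.range N, C * ‖Qf (x n)‖ := by
          refine mul_le_mul_of_nonneg_left (Finset.sum_le_sum fun n hn => ?_) (by positivity)
          rw [norm_mul, Complex.norm_conj]
          exact mul_le_mul_of_nonneg_right (hf (x n) (hxmem n)) (norm_nonneg _)
      _ = C * ((1/(N:ℝ)) * ∑ n ∈ Finset.range N, ‖Qf (x n)‖) := by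
          rw [← Finset.mul_sum]; ring
  -- Cauchy–Schwarz at the nodes
  have hCS : ((1/(N:ℝ)) * ∑ n ∈ Finset.range N, ‖Qf (x n)‖)^2
      ≤ (1/(N:ℝ)) * ∑ n ∈ Finset.range N, ‖Qf (x n)‖^2 := by
    have h1 := Finset.sum_mul_sq_le_sq_mul_sq (Finset.range N) (fun _ => (1:ℝ))
      (fun n => ‖Qf (x n)‖)
    simp only [one_pow, one_mul, Finset.sum_const, Finset.card_range, nsmul_eq_mul, mul_one] at h1
    rw [mul_pow]
    calc (1/(N:ℝ))^2 * (∑ n ∈ Finset.range N, ‖Qf (x n)‖)^2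
        ≤ (1/(N:ℝ))^2 * ((N:ℝ) * ∑ n ∈ Finset.range N, ‖Qf (x n)‖^2) := by
          gcongr
      _ = (1/(N:ℝ)) * ∑ n ∈ Finset.range N, ‖Qf (x n)‖^2 := by
          field_simp
  -- MZ at c
  have hMZc := hMZ c
  simp only [← hQf'] at hMZc
  rw [hTS] at hMZc
  have hDle : (1/(N:ℝ)) * ∑ n ∈ Finset.range N, ‖Qf (x n)‖^2 ≤ (1+η) * S := by
    have := (abs_le.mp hMZc).2
    linarith
  -- conclude
  have hfinal : S ≤ (1+η) * C^2 := by
    set A : ℝ := (1/(N:ℝ)) * ∑ n ∈ Finset.range N, ‖Qf (x n)‖ with hA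
    have hA0 : 0 ≤ A := by positivity
    nlinarith [mul_self_le_mul_self hS_nonneg hSle,
      mul_le_mul_of_nonneg_left (hCS.trans hDle) (sq_nonneg C),
      hS_nonneg, mul_nonneg (by linarith : (0:ℝ) ≤ 1+η) (sq_nonneg C)]
  rw [hTS]
  calc Real.sqrt S ≤ Real.sqrt ((1+η) * C^2) := Real.sqrt_le_sqrt hfinal
    _ = Real.sqrt (1+η) * C := by
        rw [Real.sqrt_mul (by linarith), Real.sqrt_sq hC0]
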